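/- Let x, y, z ∈ ℝ² be pairwise distinct, set X = x−y, Y = y−z, Z = z−x, and let K(w) = −w/‖w‖² for w ≠ 0, K(0)=0. Let L_η(r) = log(1+1/(η+r)) − 1/(1+η+r) for η > 0. Then L_η(‖X‖²)[1 + X·(Z/‖Z‖² + Y/‖Y‖²)] + L_η(‖Y‖²)[1 + Y·(X/‖X‖² + Z/‖Z‖²)] + L_η(‖Z‖²)[1 + Z·(Y/‖Y‖² + X/‖X‖²)] = (L_η(‖X‖²)X + L_η(‖Y‖²)Y + L_η(‖Z‖²)Z) · (X/‖X‖² + Y/‖Y‖² + Z/‖Z‖²), and this quantity is nonnegative. -/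

import Mathlib

open scoped RealInnerProductSpace
open Real

section Aux

variable {E : Type*} [NormedAddCommGroup E] [InnerProductSpace ℝ E]

theorem stmt_16_key (X Y : E) (p₁ p₂ p₃ q₁ q₂ q₃ : ℝ)
    (h1 : ‖X‖ ≤ ‖Y‖) (h2 : ‖Y‖ ≤ ‖X + Y‖)
    (hp1 : p₂ ≤ p₁) (hp2 : p₃ ≤ p₂) (hq1 : q₂ ≤ q₁) (hq2 : q₃ ≤ q₂) :
    0 ≤ ⟪p₁ • X + p₂ • Y - p₃ • (X + Y), q₁ • X + q₂ • Y - q₃ • (X + Y)⟫ := by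
  have ha : (0:ℝ) ≤ ‖X‖ ^ 2 := by positivity
  have hab : ‖X‖ ^ 2 ≤ ‖Y‖ ^ 2 := by
    have := norm_nonneg X; nlinarith
  have hA : ‖Y‖ ^ 2 ≤ ‖X + Y‖ ^ 2 := by
    have := norm_nonneg Y; nlinarith
  rw [norm_add_sq_real, real_inner_comm Y X] at hA
  simp only [inner_sub_left, inner_sub_right, inner_add_left, inner_add_right,
    real_inner_smul_left, real_inner_smul_right, real_inner_self_eq_norm_sq,
    real_inner_comm Y X]
  nlinarith [mul_nonneg (mul_nonneg (sub_nonneg.2 (hp2.trans hp1)) (sub_nonneg.2 (hq2.trans hq1))) ha,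
    mul_nonneg (mul_nonneg (sub_nonneg.2 hp1) (sub_nonneg.2 hq1)) ha,
    mul_nonneg (mul_nonneg (sub_nonneg.2 hp2) (sub_nonneg.2 hq2)) ha,
    mul_nonneg (mul_nonneg (sub_nonneg.2 hp2) (sub_nonneg.2 hq2)) (sub_nonneg.2 hab),
    mul_nonneg (add_nonneg (mul_nonneg (sub_nonneg.2 (hp2.trans hp1)) (sub_nonneg.2 hq2)) (mul_nonneg (sub_nonneg.2 hp2) (sub_nonneg.2 (hq2.trans hq1)))) (by linarith : (0:ℝ) ≤ ‖X‖^2 + 2 * ⟪Y, X⟫)]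

theorem stmt_16_key3 (X Y Z : E) (hXYZ : X + Y + Z = 0)
    (hX : X ≠ 0) (hY : Y ≠ 0) (hZ : Z ≠ 0)
    (φ ψ : ℝ → ℝ)
    (hφ : ∀ r s : ℝ, 0 < r → r ≤ s → φ s ≤ φ r)
    (hψ : ∀ r s : ℝ, 0 < r → r ≤ s → ψ s ≤ ψ r) :
    0 ≤ ⟪φ ‖X‖ • X + φ ‖Y‖ • Y + φ ‖Z‖ • Z,
         ψ ‖X‖ • X + ψ ‖Y‖ • Y + ψ ‖Z‖ • Z⟫ := by
  have nX : 0 < ‖X‖ := norm_pos_iff.2 hX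
  have nY : 0 < ‖Y‖ := norm_pos_iff.2 hY
  have nZ : 0 < ‖Z‖ := norm_pos_iff.2 hZ
  rcases le_total ‖X‖ ‖Y‖ with h1 | h1 <;> rcases le_total ‖Y‖ ‖Z‖ with h2 | h2 <;>
    rcases le_total ‖X‖ ‖Z‖ with h3 | h3
  · have e : Z = -(X + Y) := by rw [eq_neg_iff_add_eq_zero, ← hXYZ]; abel
    have hn : ‖X + Y‖ = ‖Z‖ := by rw [e, norm_neg]
    have := stmt_16_key X Y (φ ‖X‖) (φ ‖Y‖) (φ ‖Z‖) (ψ ‖X‖) (ψ ‖Y‖) (ψ ‖Z‖)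
      h1 (hn ▸ h2) (hφ _ _ nX h1) (hφ _ _ nY h2) (hψ _ _ nX h1) (hψ _ _ nY h2)
    convert this using 2 <;> rw [e] <;> module
  · have e : Z = -(X + Y) := by rw [eq_neg_iff_add_eq_zero, ← hXYZ]; abel
    have hn : ‖X + Y‖ = ‖Z‖ := by rw [e, norm_neg]
    have := stmt_16_key X Y (φ ‖X‖) (φ ‖Y‖) (φ ‖Z‖) (ψ ‖X‖) (ψ ‖Y‖) (ψ ‖Z‖)
      h1 (hn ▸ h2) (hφ _ _ nX h1) (hφ _ _ nY h2) (hψ _ _ nX h1) (hψ _ _ nY h2)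
    convert this using 2 <;> rw [e] <;> module
  · have e : Y = -(X + Z) := by
      rw [eq_neg_iff_add_eq_zero, ← hXYZ]; abel
    have hn : ‖X + Z‖ = ‖Y‖ := by rw [e, norm_neg]
    have := stmt_16_key X Z (φ ‖X‖) (φ ‖Z‖) (φ ‖Y‖) (ψ ‖X‖) (ψ ‖Z‖) (ψ ‖Y‖)
      h3 (hn ▸ h2) (hφ _ _ nX h3) (hφ _ _ nZ h2) (hψ _ _ nX h3) (hψ _ _ nZ h2)
    convert this using 2 <;> rw [e] <;> module
  · have e : Y = -(Z + X) := by
      rw [eq_neg_iff_add_eq_zero, ← hXYZ]; abel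
    have hn : ‖Z + X‖ = ‖Y‖ := by rw [e, norm_neg]
    have := stmt_16_key Z X (φ ‖Z‖) (φ ‖X‖) (φ ‖Y‖) (ψ ‖Z‖) (ψ ‖X‖) (ψ ‖Y‖)
      h3 (hn ▸ h1) (hφ _ _ nZ h3) (hφ _ _ nX h1) (hψ _ _ nZ h3) (hψ _ _ nX h1)
    convert this using 2 <;> rw [e] <;> module
  · have e : Z = -(Y + X) := by
      rw [eq_neg_iff_add_eq_zero, ← hXYZ]; abel
    have hn : ‖Y + X‖ = ‖Z‖ := by rw [e, norm_neg]
    have := stmt_16_key Y X (φ ‖Y‖) (φ ‖X‖) (φ ‖Z‖) (ψ ‖Y‖) (ψ ‖X‖) (ψ ‖Z‖)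
      h1 (hn ▸ h3) (hφ _ _ nY h1) (hφ _ _ nX h3) (hψ _ _ nY h1) (hψ _ _ nX h3)
    convert this using 2 <;> rw [e] <;> module
  · have e : X = -(Y + Z) := by
      rw [eq_neg_iff_add_eq_zero, ← hXYZ]; abel
    have hn : ‖Y + Z‖ = ‖X‖ := by rw [e, norm_neg]
    have := stmt_16_key Y Z (φ ‖Y‖) (φ ‖Z‖) (φ ‖X‖) (ψ ‖Y‖) (ψ ‖Z‖) (ψ ‖X‖)
      h2 (hn ▸ h3) (hφ _ _ nY h2) (hφ _ _ nZ h3) (hψ _ _ nY h2) (hψ _ _ nZ h3)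
    convert this using 2 <;> rw [e] <;> module
  · have e : X = -(Y + Z) := by
      rw [eq_neg_iff_add_eq_zero, ← hXYZ]; abel
    have hn : ‖Y + Z‖ = ‖X‖ := by rw [e, norm_neg]
    have h2' : ‖Y‖ ≤ ‖Z‖ := le_trans h1 h3
    have h3' : ‖Z‖ ≤ ‖X‖ := le_trans h2 h1
    have := stmt_16_key Y Z (φ ‖Y‖) (φ ‖Z‖) (φ ‖X‖) (ψ ‖Y‖) (ψ ‖Z‖) (ψ ‖X‖)
      h2' (hn ▸ h3') (hφ _ _ nY h2') (hφ _ _ nZ h3') (hψ _ _ nY h2') (hψ _ _ nZ h3')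
    convert this using 2 <;> rw [e] <;> module
  · have e : X = -(Z + Y) := by
      rw [eq_neg_iff_add_eq_zero, ← hXYZ]; abel
    have hn : ‖Z + Y‖ = ‖X‖ := by rw [e, norm_neg]
    have := stmt_16_key Z Y (φ ‖Z‖) (φ ‖Y‖) (φ ‖X‖) (ψ ‖Z‖) (ψ ‖Y‖) (ψ ‖X‖)
      h2 (hn ▸ h1) (hφ _ _ nZ h2) (hφ _ _ nY h1) (hψ _ _ nZ h2) (hψ _ _ nY h1)
    convert this using 2 <;> rw [e] <;> module

theorem stmt_16_ident (X Y Z : E) (hX : X ≠ 0) (hY : Y ≠ 0) (hZ : Z ≠ 0) (p₁ p₂ p₃ : ℝ) :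
    p₁ * (1 + ⟪X, (‖Z‖ ^ 2)⁻¹ • Z + (‖Y‖ ^ 2)⁻¹ • Y⟫) +
      p₂ * (1 + ⟪Y, (‖X‖ ^ 2)⁻¹ • X + (‖Z‖ ^ 2)⁻¹ • Z⟫) +
      p₃ * (1 + ⟪Z, (‖Y‖ ^ 2)⁻¹ • Y + (‖X‖ ^ 2)⁻¹ • X⟫) =
    ⟪p₁ • X + p₂ • Y + p₃ • Z,
      (‖X‖ ^ 2)⁻¹ • X + (‖Y‖ ^ 2)⁻¹ • Y + (‖Z‖ ^ 2)⁻¹ • Z⟫ := by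
  have hX2 : (‖X‖:ℝ) ^ 2 ≠ 0 := pow_ne_zero _ (norm_ne_zero_iff.2 hX)
  have hY2 : (‖Y‖:ℝ) ^ 2 ≠ 0 := pow_ne_zero _ (norm_ne_zero_iff.2 hY)
  have hZ2 : (‖Z‖:ℝ) ^ 2 ≠ 0 := pow_ne_zero _ (norm_ne_zero_iff.2 hZ)
  simp only [inner_add_left, inner_add_right, real_inner_smul_left, real_inner_smul_right,
    real_inner_self_eq_norm_sq, real_inner_comm Y X, real_inner_comm Z X, real_inner_comm Z Y]
  field_simp
  ring

theorem stmt_16_Lmono (η : ℝ) (hη : 0 < η) (r s : ℝ) (hr : 0 ≤ r) (hrs : r ≤ s) :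
    Real.log (1 + 1 / (η + s)) - 1 / (1 + η + s) ≤
      Real.log (1 + 1 / (η + r)) - 1 / (1 + η + r) := by
  set u := η + r with hu
  set v := η + s with hv
  have h1 : (0:ℝ) < u := by positivity
  have h2 : (0:ℝ) < v := by simp [hv]; linarith
  have h3 : u ≤ v := by simp [hu, hv]; linarith
  have hA : (0:ℝ) < 1 + 1/u := by positivity
  have hB : (0:ℝ) < 1 + 1/v := by positivity
  have hlog : Real.log ((1 + 1/v) / (1 + 1/u)) ≤ (1 + 1/v) / (1 + 1/u) - 1 :=
    Real.log_le_sub_one_of_pos (by positivity)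
  rw [Real.log_div hB.ne' hA.ne'] at hlog
  have e : (1 + 1/v) / (1 + 1/u) - 1 ≤ 1 / (1 + v) - 1 / (1 + u) := by
    have eL : (1 + 1/v) / (1 + 1/u) - 1 = (u - v)/(v*(u+1)) := by
      field_simp; ring
    have eR : 1/(1+v) - 1/(1+u) = (u - v)/((1+v)*(1+u)) := by
      field_simp; ring
    rw [eL, eR, div_le_div_iff₀ (by positivity) (by positivity)]
    nlinarith [mul_nonneg (sub_nonneg.2 h3) (by positivity : (0:ℝ) ≤ 1 + u)]
  have g1 : 1 + η + r = 1 + u := by rw [hu]; ring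
  have g2 : 1 + η + s = 1 + v := by rw [hv]; ring
  rw [g1, g2]
  linarith

end Aux

theorem stmt_16 (η : ℝ) (hη : 0 < η)
    (Lη : ℝ → ℝ)
    (hLη : Lη = fun r => Real.log (1 + 1 / (η + r)) - 1 / (1 + η + r))
    (x y z : EuclideanSpace ℝ (Fin 2))
    (hxy : x ≠ y) (hyz : y ≠ z) (hzx : z ≠ x) :
    (Lη (‖x - y‖ ^ 2) *
        (1 + ⟪x - y, (‖z - x‖ ^ 2)⁻¹ • (z - x) + (‖y - z‖ ^ 2)⁻¹ • (y - z)⟫) +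
      Lη (‖y - z‖ ^ 2) *
        (1 + ⟪y - z, (‖x - y‖ ^ 2)⁻¹ • (x - y) + (‖z - x‖ ^ 2)⁻¹ • (z - x)⟫) +
      Lη (‖z - x‖ ^ 2) *
        (1 + ⟪z - x, (‖y - z‖ ^ 2)⁻¹ • (y - z) + (‖x - y‖ ^ 2)⁻¹ • (x - y)⟫)
      = ⟪Lη (‖x - y‖ ^ 2) • (x - y) + Lη (‖y - z‖ ^ 2) • (y - z) +
            Lη (‖z - x‖ ^ 2) • (z - x),
          (‖x - y‖ ^ 2)⁻¹ • (x - y) + (‖y - z‖ ^ 2)⁻¹ • (y - z) +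
            (‖z - x‖ ^ 2)⁻¹ • (z - x)⟫) ∧
    0 ≤ ⟪Lη (‖x - y‖ ^ 2) • (x - y) + Lη (‖y - z‖ ^ 2) • (y - z) +
            Lη (‖z - x‖ ^ 2) • (z - x),
          (‖x - y‖ ^ 2)⁻¹ • (x - y) + (‖y - z‖ ^ 2)⁻¹ • (y - z) +
            (‖z - x‖ ^ 2)⁻¹ • (z - x)⟫ := by
  have hX : x - y ≠ 0 := sub_ne_zero.2 hxy
  have hY : y - z ≠ 0 := sub_ne_zero.2 hyz
  have hZ : z - x ≠ 0 := sub_ne_zero.2 hzx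
  constructor
  · exact stmt_16_ident (x - y) (y - z) (z - x) hX hY hZ _ _ _
  · have hXYZ : (x - y) + (y - z) + (z - x) = 0 := by abel
    have hφ : ∀ r s : ℝ, 0 < r → r ≤ s →
        (fun n : ℝ => Lη (n ^ 2)) s ≤ (fun n : ℝ => Lη (n ^ 2)) r := by
      intro r s hr hrs
      simp only [hLη]
      exact stmt_16_Lmono η hη (r ^ 2) (s ^ 2) (by positivity) (by nlinarith)
    have hψ : ∀ r s : ℝ, 0 < r → r ≤ s →
        (fun n : ℝ => (n ^ 2)⁻¹) s ≤ (fun n : ℝ => (n ^ 2)⁻¹) r := by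
      intro r s hr hrs
      simp only
      exact inv_anti₀ (by positivity) (by nlinarith)
    have h := stmt_16_key3 (x - y) (y - z) (z - x) hXYZ hX hY hZ
      (fun n : ℝ => Lη (n ^ 2)) (fun n : ℝ => (n ^ 2)⁻¹) hφ hψ
    simpa using h
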